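/- Dual generalized medial soundness: let A(x₁,…,xₙ) be a boolean function given by a formula built only from ∧ and ∨ in which each variable occurs exactly once. Then for all booleans b₁,…,bₙ,c₁,…,cₙ, A(b₁ ∧ c₁, …, bₙ ∧ cₙ) implies A(b₁,…,bₙ) ∧ A(c₁,…,cₙ). -/
import Mathlib

inductive MF (V : Type) : Type
  | leaf : V → MF V
  | and : MF V → MF V → MF V
  | or : MF V → MF V → MF V

def MF.eval {V : Type} (v : V → Bool) : MF V → Bool
  | .leaf x => v x
  | .and F G => F.eval v && G.eval v
  | .or F G => F.eval v || G.eval v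

/-- The list of variable occurrences of the formula. -/
def MF.vars {V : Type} : MF V → List V
  | .leaf x => [x]
  | .and F G => F.vars ++ G.vars
  | .or F G => F.vars ++ G.vars

/-- De Morgan dual: swap ∧ and ∨, keeping variables fixed. -/
def MF.dual {V : Type} : MF V → MF V
  | .leaf x => .leaf x
  | .and F G => .or F.dual G.dual
  | .or F G => .and F.dual G.dual

/-- Replace every connective by ∧. -/
def MF.allAnd {V : Type} : MF V → MF V
  | .leaf x => .leaf x
  | .and F G => .and F.allAnd G.allAnd
  | .or F G => .and F.allAnd G.allAnd

/-- Replace every connective by ∨. -/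
def MF.allOr {V : Type} : MF V → MF V
  | .leaf x => .leaf x
  | .and F G => .or F.allOr G.allOr
  | .or F G => .or F.allOr G.allOr

lemma MF.eval_mono {V : Type} (A : MF V) (u v : V → Bool)
    (h : ∀ x, u x = true → v x = true) (hu : A.eval u = true) : A.eval v = true := by
  induction A with
  | leaf x => exact h x hu
  | and F G ihF ihG =>
    simp only [MF.eval, Bool.and_eq_true] at hu ⊢
    exact ⟨ihF hu.1, ihG hu.2⟩
  | or F G ihF ihG =>
    simp only [MF.eval, Bool.or_eq_true] at hu ⊢
    rcases hu with h1 | h1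
    · exact Or.inl (ihF h1)
    · exact Or.inr (ihG h1)

theorem dual_generalized_medial_sound {V : Type} (A : MF V) (hlin : A.vars.Nodup)
    (b c : V → Bool) (h : A.eval (fun x => b x && c x) = true) :
    (A.eval b && A.eval c) = true := by
  rw [Bool.and_eq_true]
  constructor
  · exact A.eval_mono _ b (fun x hx => (Bool.and_eq_true _ _ ▸ hx).1) h
  · exact A.eval_mono _ c (fun x hx => (Bool.and_eq_true _ _ ▸ hx).2) h
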